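/- There exists a constant C > 0 such that for every tournament H with p(H) ≥ 3 and every N, there exists an H-free tournament G with |G| ≥ N and tr(G) ≤ |G|^(C·log(log(p(H)))/log(p(H))). -/

import Mathlib

open Finset

attribute [local instance] Classical.propDecidable

/-- A tournament on vertex set `Fin n`: for every pair of distinct vertices exactly one
direction is present, and no vertex is adjacent to itself. -/
structure Tournament where
  n : ℕ
  adj : Fin n → Fin n → Prop
  asymm : ∀ u v, adj u v → ¬ adj v u
  total : ∀ u v, u ≠ v → adj u v ∨ adj v u

namespace Tournament

/-- `S` is a transitive set: the adjacency relation restricted to `S` is a strict linear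
order (by the tournament axioms this is equivalent to transitivity on `S`). -/
def IsTransitiveSet (T : Tournament) (S : Finset (Fin T.n)) : Prop :=
  ∀ a ∈ S, ∀ b ∈ S, ∀ c ∈ S, T.adj a b → T.adj b c → T.adj a c

/-- `tr T`: the maximum size of a transitive subset of the vertices of `T`. -/
noncomputable def transNum (T : Tournament) : ℕ :=
  sSup {m | ∃ S : Finset (Fin T.n), T.IsTransitiveSet S ∧ S.card = m}

/-- `T` contains an induced copy of `H`. -/
def Contains (T H : Tournament) : Prop :=
  ∃ f : Fin H.n → Fin T.n, Function.Injective f ∧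
    ∀ u v : Fin H.n, H.adj u v ↔ T.adj (f u) (f v)

/-- `T` is `H`-free: no set of vertices of `T` induces a subtournament isomorphic to `H`. -/
def HFree (T H : Tournament) : Prop := ¬ T.Contains H

/-- `S` is a homogeneous set of `T`. -/
def IsHomogeneous (T : Tournament) (S : Finset (Fin T.n)) : Prop :=
  ∀ v, v ∉ S → (∀ s ∈ S, T.adj v s) ∨ (∀ s ∈ S, T.adj s v)

/-- A tournament is prime if it has no nontrivial homogeneous set. -/
def IsPrime (T : Tournament) : Prop :=
  ¬ ∃ S : Finset (Fin T.n), T.IsHomogeneous S ∧ 1 < S.card ∧ S.card < T.n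

/-- The backward-edge graph of `T` under the ordering `σ` (where `σ p` is the vertex in
position `p`): `u` and `v` are joined iff the tournament edge between them goes from the
later position to the earlier one. -/
def backAdj (T : Tournament) (σ : Equiv.Perm (Fin T.n)) (u v : Fin T.n) : Prop :=
  (σ.symm u < σ.symm v ∧ T.adj v u) ∨ (σ.symm v < σ.symm u ∧ T.adj u v)

/-- `σ` is a galaxy ordering of `T` with center assignment `ctr` (mapping each vertex to the
center of its star component, centers and singletons being fixed points): every backward edge
joins a leaf to its center, each star is a left star or a right star, and no center of a star
lies between two leaves of another star. -/
def IsGalaxyOrdering (T : Tournament) (σ : Equiv.Perm (Fin T.n))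
    (ctr : Fin T.n → Fin T.n) : Prop :=
  (∀ v, ctr (ctr v) = ctr v) ∧
  (∀ v, ctr v ≠ v → T.backAdj σ v (ctr v)) ∧
  (∀ u v, T.backAdj σ u v → (ctr u = u ∧ ctr v = u) ∨ (ctr v = v ∧ ctr u = v)) ∧
  (∀ c, ctr c = c →
    (∀ v, ctr v = c → v = c ∨ σ.symm v < σ.symm c) ∨
    (∀ v, ctr v = c → v = c ∨ σ.symm c < σ.symm v)) ∧
  (∀ c, ctr c = c → (∃ v, v ≠ c ∧ ctr v = c) →
    ∀ l₁ l₂, l₁ ≠ ctr l₁ → l₂ ≠ ctr l₂ → ctr l₁ = ctr l₂ → ctr l₁ ≠ c →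
      ¬ (σ.symm l₁ < σ.symm c ∧ σ.symm c < σ.symm l₂))

/-- A tournament is a galaxy if it admits a galaxy ordering. -/
def IsGalaxy (T : Tournament) : Prop := ∃ σ ctr, T.IsGalaxyOrdering σ ctr

/-- A tournament is a star: it has an ordering of its vertices under which the backward-edge
graph is connected and is a star `K_{1,t}` whose center comes before all its leaves or after
all its leaves. -/
def IsStar (T : Tournament) : Prop :=
  ∃ (σ : Equiv.Perm (Fin T.n)) (c : Fin T.n),
    (∀ v, v ≠ c → T.backAdj σ c v) ∧
    (∀ u v, T.backAdj σ u v → u = c ∨ v = c) ∧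
    ((∀ v, v ≠ c → σ.symm c < σ.symm v) ∨ (∀ v, v ≠ c → σ.symm v < σ.symm c))

/-- `P` is a partition of the vertex set of `T` into transitive sets. -/
def IsTransPartition (T : Tournament) (P : Finset (Finset (Fin T.n))) : Prop :=
  (∀ S ∈ P, T.IsTransitiveSet S) ∧ ∀ v : Fin T.n, ∃! S, S ∈ P ∧ v ∈ S

/-- The chromatic number of `T`: the least number of parts in a partition of the vertices of
`T` into transitive sets. -/
noncomputable def chromaticNum (T : Tournament) : ℕ :=
  sInf {m | ∃ P : Finset (Finset (Fin T.n)), T.IsTransPartition P ∧ P.card = m}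

/-- The directed density from `X` to `Y`. -/
noncomputable def density (T : Tournament) (X Y : Finset (Fin T.n)) : ℝ :=
  (((X ×ˢ Y).filter fun p => T.adj p.1 p.2).card : ℝ) / ((X.card : ℝ) * (Y.card : ℝ))

/-- Common part of the definitions of l-sequences and m-sequences: pairwise disjoint
nonempty sets with density at least `1 - lam` forwards. -/
def SeqBase (T : Tournament) (lam : ℝ) (m : ℕ) (S : Fin m → Finset (Fin T.n)) : Prop :=
  (∀ i, (S i).Nonempty) ∧ (∀ i j, i ≠ j → Disjoint (S i) (S j)) ∧
  ∀ i j : Fin m, i < j → 1 - lam ≤ T.density (S i) (S j)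

/-- A `(c, lam)`-l-sequence: every set is `c`-linear. -/
def IsLSeq (T : Tournament) (c lam : ℝ) (m : ℕ) (S : Fin m → Finset (Fin T.n)) : Prop :=
  T.SeqBase lam m S ∧ ∀ i, c * (T.n : ℝ) ≤ ((S i).card : ℝ)

/-- A `(c₁, c₂, lam, eps)`-m-sequence: sets in odd positions (even `0`-based indices) are
`c₂`-linear, sets in even positions are transitive and `(c₁, eps)`-big. -/
def IsMSeq (T : Tournament) (c₁ c₂ lam eps : ℝ) (m : ℕ)
    (S : Fin m → Finset (Fin T.n)) : Prop :=
  T.SeqBase lam m S ∧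
  (∀ i : Fin m, (i : ℕ) % 2 = 0 → c₂ * (T.n : ℝ) ≤ ((S i).card : ℝ)) ∧
  (∀ i : Fin m, (i : ℕ) % 2 = 1 →
    T.IsTransitiveSet (S i) ∧ c₁ * (T.n : ℝ) ^ eps ≤ ((S i).card : ℝ))

/-- A sequence of sets is smooth if the `1 - lam` density condition holds pointwise. -/
def Smooth (T : Tournament) (lam : ℝ) (m : ℕ) (S : Fin m → Finset (Fin T.n)) : Prop :=
  ∀ i j : Fin m, i < j →
    (∀ v ∈ S i, 1 - lam ≤ T.density {v} (S j)) ∧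
    (∀ v ∈ S j, 1 - lam ≤ T.density (S i) {v})

/-- `P` is a partition of the vertex set of `T` into homogeneous sets. -/
def IsHomogeneousPartition (T : Tournament) (P : Finset (Finset (Fin T.n))) : Prop :=
  (∀ A ∈ P, A.Nonempty ∧ T.IsHomogeneous A) ∧ ∀ v : Fin T.n, ∃! A, A ∈ P ∧ v ∈ A

/-- `p T`: the least number of parts of a nontrivial homogeneous partition. -/
noncomputable def partNum (T : Tournament) : ℕ :=
  sInf {m | ∃ P : Finset (Finset (Fin T.n)),
    T.IsHomogeneousPartition P ∧ 1 < P.card ∧ P.card = m}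

/-- `T` is `H`-far: for every nontrivial homogeneous partition `P` of the vertices of `H`,
`T` contains no subtournament isomorphic to the quotient tournament `H_P`. -/
def HFar (T H : Tournament) : Prop :=
  ∀ P : Finset (Finset (Fin H.n)), H.IsHomogeneousPartition P → 1 < P.card →
    ¬ ∃ g : {A // A ∈ P} → Fin T.n, Function.Injective g ∧
        ∀ A B : {A // A ∈ P}, A ≠ B →
          ((∀ a ∈ A.1, ∀ b ∈ B.1, H.adj a b) ↔ T.adj (g A) (g B))

end Tournament

open Tournament

lemma irrefl' (T : Tournament) (v : Fin T.n) : ¬ T.adj v v :=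
  fun h => T.asymm v v h h

lemma transSubset (T : Tournament) {S S' : Finset (Fin T.n)} (hsub : S' ⊆ S)
    (h : T.IsTransitiveSet S) : T.IsTransitiveSet S' :=
  fun a ha b hb c hc => h a (hsub ha) b (hsub hb) c (hsub hc)

lemma transNum_le (T : Tournament) (b : ℕ)
    (h : ∀ S, T.IsTransitiveSet S → S.card ≤ b) : T.transNum ≤ b := by
  have h0 : (0:ℕ) ∈ {m | ∃ S : Finset (Fin T.n), T.IsTransitiveSet S ∧ S.card = m} :=
    ⟨∅, fun a ha => absurd ha (Finset.notMem_empty a), Finset.card_empty⟩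
  apply csSup_le ⟨0, h0⟩
  rintro m ⟨S, hS, rfl⟩
  exact h S hS

/-- every nonempty transitive set has a source -/
lemma exists_source (T : Tournament) :
    ∀ (n : ℕ) (S : Finset (Fin T.n)), S.card = n → T.IsTransitiveSet S → S.Nonempty →
      ∃ m ∈ S, ∀ s ∈ S, s ≠ m → T.adj m s := by
  intro n
  induction n with
  | zero => intro S hc _ hne; simp [Finset.card_eq_zero.mp hc] at hne
  | succ n ih =>
    intro S hc hT hne
    obtain ⟨a, ha⟩ := hne
    rcases Finset.eq_empty_or_nonempty (S.erase a) with he | hne'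
    · refine ⟨a, ha, fun s hs hsa => ?_⟩
      exact absurd (Finset.mem_erase.mpr ⟨hsa, hs⟩) (by simp [he])
    · obtain ⟨m, hm, hmax⟩ := ih (S.erase a) (by rw [Finset.card_erase_of_mem ha, hc]; rfl)
        (transSubset T (Finset.erase_subset _ _) hT) hne'
      have hma : m ≠ a := (Finset.mem_erase.mp hm).1
      have hmS : m ∈ S := (Finset.mem_erase.mp hm).2
      rcases T.total a m hma.symm with hadj | hadj
      · refine ⟨a, ha, fun s hs hsa => ?_⟩
        by_cases hsm : s = m
        · rwa [hsm]
        · exact hT a ha m hmS s hs hadj (hmax s (Finset.mem_erase.mpr ⟨hsa, hs⟩) hsm)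
      · refine ⟨m, hmS, fun s hs hsm => ?_⟩
        by_cases hsa : s = a
        · rwa [hsa]
        · exact hmax s (Finset.mem_erase.mpr ⟨hsa, hs⟩) hsm

lemma exists_enum (T : Tournament) :
    ∀ (n : ℕ) (S : Finset (Fin T.n)), S.card = n → T.IsTransitiveSet S →
      ∃ g : Fin n → Fin T.n, Function.Injective g ∧ (∀ i, g i ∈ S) ∧
        ∀ i j : Fin n, i < j → T.adj (g i) (g j) := by
  intro n
  induction n with
  | zero =>
    intro S hc hT
    exact ⟨Fin.elim0, fun i => i.elim0, fun i => i.elim0, fun i => i.elim0⟩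
  | succ n ih =>
    intro S hc hT
    have hne : S.Nonempty := Finset.card_pos.mp (by omega)
    obtain ⟨m, hm, hmax⟩ := exists_source T (n+1) S hc hT hne
    obtain ⟨g, hginj, hgmem, hgadj⟩ := ih (S.erase m)
      (by rw [Finset.card_erase_of_mem hm, hc]; rfl)
      (transSubset T (Finset.erase_subset _ _) hT)
    refine ⟨Fin.cons m g, ?_, ?_, ?_⟩
    · intro i j hij
      obtain rfl | ⟨i', rfl⟩ := Fin.eq_zero_or_eq_succ i <;>
        obtain rfl | ⟨j', rfl⟩ := Fin.eq_zero_or_eq_succ j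
      · rfl
      · exact absurd (hgmem j') (by simp_all [Finset.mem_erase, Fin.cons_zero, Fin.cons_succ])
      · exact absurd (hgmem i') (by simp_all [Finset.mem_erase, Fin.cons_zero, Fin.cons_succ])
      · simp only [Fin.cons_succ] at hij; rw [hginj hij]
    · intro i
      obtain rfl | ⟨i', rfl⟩ := Fin.eq_zero_or_eq_succ i
      · exact hm
      · exact Finset.mem_of_mem_erase (hgmem i')
    · intro i j hij
      obtain rfl | ⟨i', rfl⟩ := Fin.eq_zero_or_eq_succ i <;>
        obtain rfl | ⟨j', rfl⟩ := Fin.eq_zero_or_eq_succ j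
      · exact absurd hij (lt_irrefl _)
      · simp only [Fin.cons_zero, Fin.cons_succ]
        exact hmax _ (Finset.mem_of_mem_erase (hgmem j'))
          (fun h => (Finset.mem_erase.mp (hgmem j')).1 h)
      · exact absurd hij (Fin.not_lt_zero _)
      · simp only [Fin.cons_succ]
        exact hgadj i' j' (Fin.succ_lt_succ_iff.mp hij)
def adjf (k : ℕ) (f : Fin k × Fin k → Bool) (u v : Fin k) : Prop :=
  (u < v ∧ f (u,v) = true) ∨ (v < u ∧ f (v,u) = false)

def Tf (k : ℕ) (f : Fin k × Fin k → Bool) : Tournament where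
  n := k
  adj := adjf k f
  asymm := by
    rintro u v (⟨ha,hb⟩|⟨ha,hb⟩) (⟨hc,hd⟩|⟨hc,hd⟩) <;>
      first | exact absurd hc (lt_asymm ha) | simp_all
  total := by
    intro u v huv
    rcases lt_or_gt_of_ne huv with h | h
    · by_cases hf : f (u,v) = true
      · exact Or.inl (Or.inl ⟨h, hf⟩)
      · exact Or.inr (Or.inr ⟨h, by simpa using hf⟩)
    · by_cases hf : f (v,u) = true
      · exact Or.inr (Or.inl ⟨h, hf⟩)
      · exact Or.inl (Or.inr ⟨h, by simpa using hf⟩)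

lemma exists_low_tr (k : ℕ) (hk : 1 ≤ k) :
    ∃ P : Tournament, P.n = k ∧
      ∀ S : Finset (Fin P.n), P.IsTransitiveSet S → S.card ≤ 2 * Nat.log 2 k + 3 := by
  classical
  set L := Nat.log 2 k with hL
  set t := 2 * L + 4 with ht
  by_cases htk : k < t
  · refine ⟨Tf k (fun _ => true), rfl, fun S _ => ?_⟩
    have : S.card ≤ k := le_trans (Finset.card_le_univ S) (by simp [Tf]; exact (Fintype.card_fin k).le)
    omega
  -- now t ≤ k
  push_neg at htk
  set U : Finset (Fin t × Fin t) := Finset.univ.filter (fun p => p.1 < p.2) with hU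
  set D := U.card with hDdef
  -- card of U
  have hD2 : D * 2 = t * (t - 1) := by
    have hsplit : (Finset.univ.filter fun p : Fin t × Fin t => p.1 < p.2).card
        + (Finset.univ.filter fun p : Fin t × Fin t => ¬ p.1 < p.2).card = t * t := by
      rw [Finset.card_filter_add_card_filter_not]
      simp [Finset.card_univ]
    have e1 : (Finset.univ.filter fun p : Fin t × Fin t => ¬ p.1 < p.2)
        = (Finset.univ.filter fun p : Fin t × Fin t => p.2 < p.1)
          ∪ (Finset.univ.filter fun p : Fin t × Fin t => p.1 = p.2) := by
      ext p
      simp only [Finset.mem_filter, Finset.mem_union, Finset.mem_univ, true_and]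
      rw [Fin.lt_def, Fin.lt_def, Fin.ext_iff]
      omega
    have e2 : (Finset.univ.filter fun p : Fin t × Fin t => p.1 = p.2).card = t := by
      have himg : (Finset.univ.filter fun p : Fin t × Fin t => p.1 = p.2)
          = (Finset.univ : Finset (Fin t)).image (fun a => (a,a)) := by
        ext p
        simp only [Finset.mem_filter, Finset.mem_univ, true_and, Finset.mem_image]
        constructor
        · intro h
          exact ⟨p.1, by rw [Prod.ext_iff]; exact ⟨rfl, h⟩⟩
        · rintro ⟨a, rfl⟩; rfl
      rw [himg, Finset.card_image_of_injective _ (fun a b h => congrArg Prod.fst h)]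
      simp
    have e3 : (Finset.univ.filter fun p : Fin t × Fin t => p.2 < p.1).card = D := by
      rw [hDdef, hU]
      exact Finset.card_nbij' (fun p => (p.2, p.1)) (fun p => (p.2, p.1))
        (by intro p hp; simp_all) (by intro p hp; simp_all)
        (by intro p _; rfl) (by intro p _; rfl)
    have hdisj : Disjoint (Finset.univ.filter fun p : Fin t × Fin t => p.2 < p.1)
        (Finset.univ.filter fun p : Fin t × Fin t => p.1 = p.2) := by
      rw [Finset.disjoint_left]
      rintro p hp hq
      simp only [Finset.mem_filter] at hp hq
      exact absurd hq.2 (ne_of_gt hp.2)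
    have e4 : ((Finset.univ.filter fun p : Fin t × Fin t => p.2 < p.1)
        ∪ (Finset.univ.filter fun p : Fin t × Fin t => p.1 = p.2)).card = D + t := by
      rw [Finset.card_union_of_disjoint hdisj, e2, e3]
    rw [e1, e4] at hsplit
    rw [← hU, ← hDdef] at hsplit
    have : D + (D + t) = t * t := hsplit
    have htt : t * t = t * (t-1) + t := by
      have : t - 1 + 1 = t := by omega
      calc t * t = t * (t - 1 + 1) := by rw [this]
      _ = t * (t-1) + t := by ring
    omega
  -- the bad event for a fixed embedding pattern g
  set Bad : (Fin t → Fin k) → Finset (Fin k × Fin k → Bool) := fun g =>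
    Finset.univ.filter (fun f => ∀ i j : Fin t, i < j → adjf k f (g i) (g j)) with hBad
  have hDk : D ≤ k * k := by
    have h1 : t * (t-1) ≤ k * k := Nat.mul_le_mul htk (by omega)
    omega
  have key : ∀ g : Fin t → Fin k, Function.Injective g → (Bad g).card ≤ 2 ^ (k*k - D) := by
    intro g hg
    set c : Fin t × Fin t → Fin k × Fin k := fun p =>
      if g p.1 < g p.2 then (g p.1, g p.2) else (g p.2, g p.1) with hc
    set Cg : Finset (Fin k × Fin k) := U.image c with hCg
    have hCinj : Set.InjOn c U := by
      rintro ⟨a,b⟩ ha ⟨a',b'⟩ hb hab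
      simp only [hU, Finset.coe_filter, Set.mem_setOf_eq, Finset.mem_univ, true_and] at ha hb
      simp only [hc] at hab
      have hne1 : g a ≠ g b := fun h => absurd (hg h) (ne_of_lt ha)
      have hne2 : g a' ≠ g b' := fun h => absurd (hg h) (ne_of_lt hb)
      by_cases h1 : g a < g b <;> by_cases h2 : g a' < g b' <;>
        simp only [h1, h2, if_pos, if_neg, if_true, if_false] at hab <;>
        rw [Prod.ext_iff] at hab <;>
        obtain ⟨hx, hy⟩ := hab
      · exact Prod.ext (hg hx) (hg hy)
      · exfalso
        have e1 : a = b' := hg hx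
        have e2 : b = a' := hg hy
        subst e1; subst e2
        exact absurd hb (by omega)
      · exfalso
        have e1 : a = b' := hg hy
        have e2 : b = a' := hg hx
        subst e1; subst e2
        exact absurd hb (by omega)
      · exact Prod.ext (hg hy) (hg hx)
    have hCcard : Cg.card = D := by
      rw [hCg, Finset.card_image_of_injOn hCinj]
    -- injection into functions on the complement
    have hinj : Set.InjOn (fun (f : Fin k × Fin k → Bool) => fun a : ↥(Cgᶜ : Finset (Fin k × Fin k)) => f a.val) (Bad g) := by
      intro f1 hf1 f2 hf2 hr
      simp only [hBad, Finset.coe_filter, Set.mem_setOf_eq, Finset.mem_univ, true_and] at hf1 hf2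
      funext p
      by_cases hp : p ∈ Cg
      · obtain ⟨q, hqU, hqe⟩ := Finset.mem_image.mp hp
        simp only [hU, Finset.mem_filter, Finset.mem_univ, true_and] at hqU
        have hA1 := hf1 q.1 q.2 hqU
        have hA2 := hf2 q.1 q.2 hqU
        have hne : g q.1 ≠ g q.2 := fun h => absurd (hg h) (ne_of_lt hqU)
        by_cases hgq : g q.1 < g q.2
        · have hpq : p = (g q.1, g q.2) := by rw [← hqe, hc]; simp [hgq]
          rcases hA1 with ⟨_, h⟩ | ⟨h', _⟩
          · rcases hA2 with ⟨_, h2⟩ | ⟨h2', _⟩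
            · rw [hpq, h, h2]
            · exact absurd h2' (lt_asymm hgq)
          · exact absurd h' (lt_asymm hgq)
        · have hgq' : g q.2 < g q.1 := (hne.lt_or_gt).resolve_left hgq
          have hpq : p = (g q.2, g q.1) := by rw [← hqe, hc]; simp [hgq]
          rcases hA1 with ⟨h', _⟩ | ⟨_, h⟩
          · exact absurd h' hgq
          · rcases hA2 with ⟨h2', _⟩ | ⟨_, h2⟩
            · exact absurd h2' hgq
            · rw [hpq, h, h2]
      · have hpc : p ∈ (Cgᶜ : Finset (Fin k × Fin k)) := Finset.mem_compl.mpr hp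
        exact congrFun hr ⟨p, hpc⟩
    have hcard : (Bad g).card ≤ Fintype.card (↥(Cgᶜ : Finset (Fin k × Fin k)) → Bool) := by
      rw [← Finset.card_univ]
      exact Finset.card_le_card_of_injOn _ (fun _ _ => Finset.mem_univ _) hinj
    rw [Fintype.card_fun] at hcard
    simp only [Fintype.card_coe, Finset.card_compl, Fintype.card_prod, Fintype.card_fin,
      Fintype.card_bool, hCcard] at hcard
    exact hcard
  -- union bound
  set badAll : Finset (Fin k × Fin k → Bool) := Finset.univ.filter
    (fun f => ∃ S : Finset (Fin k), (Tf k f).IsTransitiveSet S ∧ S.card = t) with hbadAll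
  have hsub : badAll ⊆ (Finset.univ.filter
      (fun g : Fin t → Fin k => Function.Injective g)).biUnion Bad := by
    intro f hf
    simp only [hbadAll, Finset.mem_filter, Finset.mem_univ, true_and] at hf
    obtain ⟨S, hS, hcard⟩ := hf
    obtain ⟨g, hginj, _, hgadj⟩ := exists_enum (Tf k f) t S hcard hS
    exact Finset.mem_biUnion.mpr ⟨g, Finset.mem_filter.mpr ⟨Finset.mem_univ _, hginj⟩,
      Finset.mem_filter.mpr ⟨Finset.mem_univ _, hgadj⟩⟩
  have hcount : badAll.card ≤ k ^ t * 2 ^ (k*k - D) := by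
    calc badAll.card ≤ _ := Finset.card_le_card hsub
    _ ≤ ∑ g ∈ Finset.univ.filter (fun g : Fin t → Fin k => Function.Injective g),
        (Bad g).card := Finset.card_biUnion_le
    _ ≤ (Finset.univ.filter (fun g : Fin t → Fin k => Function.Injective g)).card
        * 2 ^ (k*k - D) := by
      rw [← smul_eq_mul]
      exact Finset.sum_le_card_nsmul _ _ _
        (fun g hgm => key g ((Finset.mem_filter.mp hgm).2))
    _ ≤ k ^ t * 2 ^ (k*k - D) := by
      apply Nat.mul_le_mul_right
      have hle : (Finset.univ.filter (fun g : Fin t → Fin k => Function.Injective g)).card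
          ≤ (Finset.univ : Finset (Fin t → Fin k)).card :=
        Finset.card_le_card (Finset.filter_subset _ _)
      rwa [Finset.card_univ, Fintype.card_fun, Fintype.card_fin, Fintype.card_fin] at hle
  have hkt : k ^ t < 2 ^ D := by
    have hkL : k < 2 ^ (L + 1) := Nat.lt_pow_succ_log_self (by norm_num) k
    have h1 : k ^ t < (2 ^ (L+1)) ^ t := Nat.pow_lt_pow_left hkL (by omega)
    have h2 : (2 ^ (L+1)) ^ t = 2 ^ ((L+1) * t) := by rw [← pow_mul]
    have ht1 : t - 1 = 2 * L + 3 := by omega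
    have h3 : (L+1) * t ≤ D := by nlinarith [hD2, ht1]
    calc k ^ t < 2 ^ ((L+1)*t) := h2 ▸ h1
    _ ≤ 2 ^ D := Nat.pow_le_pow_right (by norm_num) h3
  have hstrict : badAll.card < 2 ^ (k*k) := by
    calc badAll.card ≤ k ^ t * 2 ^ (k*k - D) := hcount
    _ < 2 ^ D * 2 ^ (k*k - D) := (Nat.mul_lt_mul_right (pow_pos (by norm_num) _)).mpr hkt
    _ = 2 ^ (D + (k*k - D)) := by rw [pow_add]
    _ = 2 ^ (k*k) := by congr 1; omega
  have hex : ∃ f, f ∉ badAll := by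
    by_contra h
    push_neg at h
    have huniv : badAll = Finset.univ := Finset.eq_univ_iff_forall.mpr h
    rw [huniv, Finset.card_univ, Fintype.card_fun] at hstrict
    simp at hstrict
  obtain ⟨f, hf⟩ := hex
  refine ⟨Tf k f, rfl, fun S hS => ?_⟩
  by_contra hlarge
  push_neg at hlarge
  have hts : t ≤ S.card := by omega
  obtain ⟨S', hS'sub, hS'card⟩ := Finset.exists_subset_card_eq hts
  apply hf
  simp only [hbadAll, Finset.mem_filter, Finset.mem_univ, true_and]
  exact ⟨S', transSubset _ hS'sub hS, hS'card⟩
def projP (P Q : Tournament) (u : Fin (P.n * Q.n)) : Fin P.n := (finProdFinEquiv.symm u).1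
def projQ (P Q : Tournament) (u : Fin (P.n * Q.n)) : Fin Q.n := (finProdFinEquiv.symm u).2

lemma proj_inj (P Q : Tournament) {u v : Fin (P.n * Q.n)}
    (h1 : projP P Q u = projP P Q v) (h2 : projQ P Q u = projQ P Q v) : u = v :=
  finProdFinEquiv.symm.injective (Prod.ext h1 h2)

noncomputable def prodT (P Q : Tournament) : Tournament where
  n := P.n * Q.n
  adj u v :=
    if projP P Q u = projP P Q v then Q.adj (projQ P Q u) (projQ P Q v)
    else P.adj (projP P Q u) (projP P Q v)
  asymm := by
    intro u v h1 h2
    by_cases h : projP P Q u = projP P Q v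
    · rw [if_pos h] at h1; rw [if_pos h.symm] at h2; exact Q.asymm _ _ h1 h2
    · rw [if_neg h] at h1; rw [if_neg (Ne.symm h)] at h2; exact P.asymm _ _ h1 h2
  total := by
    intro u v huv
    by_cases h : projP P Q u = projP P Q v
    · have hne2 : projQ P Q u ≠ projQ P Q v := fun h2 => huv (proj_inj P Q h h2)
      rcases Q.total _ _ hne2 with hq | hq
      · left
        show if projP P Q u = projP P Q v then Q.adj (projQ P Q u) (projQ P Q v) else P.adj (projP P Q u) (projP P Q v)
        rw [if_pos h]; exact hq
      · right
        show if projP P Q v = projP P Q u then Q.adj (projQ P Q v) (projQ P Q u) else P.adj (projP P Q v) (projP P Q u)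
        rw [if_pos h.symm]; exact hq
    · rcases P.total _ _ h with hp | hp
      · left
        show if projP P Q u = projP P Q v then Q.adj (projQ P Q u) (projQ P Q v) else P.adj (projP P Q u) (projP P Q v)
        rw [if_neg h]; exact hp
      · right
        show if projP P Q v = projP P Q u then Q.adj (projQ P Q v) (projQ P Q u) else P.adj (projP P Q v) (projP P Q u)
        rw [if_neg (Ne.symm h)]; exact hp

lemma prodT_adj_eq (P Q : Tournament) {u v : Fin (P.n * Q.n)}
    (h : projP P Q u = projP P Q v) :
    (prodT P Q).adj u v ↔ Q.adj (projQ P Q u) (projQ P Q v) := by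
  show (if projP P Q u = projP P Q v then _ else _) ↔ _
  rw [if_pos h]

lemma prodT_adj_ne (P Q : Tournament) {u v : Fin (P.n * Q.n)}
    (h : projP P Q u ≠ projP P Q v) :
    (prodT P Q).adj u v ↔ P.adj (projP P Q u) (projP P Q v) := by
  show (if projP P Q u = projP P Q v then _ else _) ↔ _
  rw [if_neg h]

noncomputable def powT (P : Tournament) : ℕ → Tournament
  | 0 => ⟨1, fun _ _ => False, fun _ _ h => h.elim, fun u v huv => absurd (Subsingleton.elim u v) huv⟩
  | m+1 => prodT P (powT P m)

lemma powT_n (P : Tournament) : ∀ m, (powT P m).n = P.n ^ m := by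
  intro m
  induction m with
  | zero => rfl
  | succ m ih => show P.n * (powT P m).n = _; rw [ih, pow_succ']

lemma trBound_prod (P Q : Tournament) (b c : ℕ)
    (hP : ∀ S, P.IsTransitiveSet S → S.card ≤ b)
    (hQ : ∀ S, Q.IsTransitiveSet S → S.card ≤ c) :
    ∀ S, (prodT P Q).IsTransitiveSet S → S.card ≤ b * c := by
  intro S hS
  have himg : P.IsTransitiveSet (S.image (projP P Q)) := by
    intro a ha b' hb' c' hc' hab hbc
    replace ha := Finset.mem_image.mp ha; replace hb' := Finset.mem_image.mp hb'; replace hc' := Finset.mem_image.mp hc'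
    obtain ⟨u, hu, hua⟩ := ha
    obtain ⟨v, hv, hvb⟩ := hb'
    obtain ⟨w, hw, hwc⟩ := hc'
    subst hua; subst hvb; subst hwc
    have hab' : projP P Q u ≠ projP P Q v := fun h => P.asymm _ _ hab (h ▸ hab)
    have hbc' : projP P Q v ≠ projP P Q w := fun h => P.asymm _ _ hbc (h ▸ hbc)
    have hac' : projP P Q u ≠ projP P Q w := by
      intro h; rw [← h] at hbc; exact P.asymm _ _ hab hbc
    have h3 := hS u hu v hv w hw ((prodT_adj_ne P Q hab').mpr hab)
      ((prodT_adj_ne P Q hbc').mpr hbc)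
    exact (prodT_adj_ne P Q hac').mp h3
  have hfib : ∀ a ∈ S.image (projP P Q),
      (S.filter fun x => projP P Q x = a).card ≤ c := by
    intro a _
    have hρinj : Set.InjOn (projQ P Q) (S.filter fun x => projP P Q x = a) := by
      intro x hx y hy hxy
      replace hx := Finset.mem_filter.mp (Finset.mem_coe.mp hx); replace hy := Finset.mem_filter.mp (Finset.mem_coe.mp hy)
      exact proj_inj P Q (hx.2.trans hy.2.symm) hxy
    have htrans : Q.IsTransitiveSet ((S.filter fun x => projP P Q x = a).image (projQ P Q)) := by
      intro x hx y hy z hz hxy hyz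
      simp only [Finset.mem_image, Finset.mem_filter] at hx hy hz
      obtain ⟨u, hu, hux⟩ := hx
      obtain ⟨v, hv, hvy⟩ := hy
      obtain ⟨w, hw, hwz⟩ := hz
      subst hux; subst hvy; subst hwz
      replace hu := Finset.mem_filter.mp hu; replace hv := Finset.mem_filter.mp hv; replace hw := Finset.mem_filter.mp hw
      have h3 := hS u hu.1 v hv.1 w hw.1
        ((prodT_adj_eq P Q (hu.2.trans hv.2.symm)).mpr hxy)
        ((prodT_adj_eq P Q (hv.2.trans hw.2.symm)).mpr hyz)
      exact (prodT_adj_eq P Q (hu.2.trans hw.2.symm)).mp h3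
    calc (S.filter fun x => projP P Q x = a).card
        = ((S.filter fun x => projP P Q x = a).image (projQ P Q)).card :=
          (Finset.card_image_of_injOn hρinj).symm
    _ ≤ c := hQ _ htrans
  calc S.card ≤ c * (S.image (projP P Q)).card :=
        Finset.card_le_mul_card_image S c hfib
  _ ≤ c * b := Nat.mul_le_mul_left _ (hP _ himg)
  _ = b * c := Nat.mul_comm _ _

lemma trBound_pow (P : Tournament) (b : ℕ)
    (hP : ∀ S, P.IsTransitiveSet S → S.card ≤ b) :
    ∀ m, ∀ S, (powT P m).IsTransitiveSet S → S.card ≤ b ^ m := by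
  intro m
  induction m with
  | zero =>
    intro S _
    have h1 : S.card ≤ 1 := le_trans (Finset.card_le_univ S) (by simp [powT]; exact (Fintype.card_fin 1).le)
    simpa using h1
  | succ m ih =>
    intro S hS
    have h := trBound_prod P (powT P m) b (b ^ m) hP ih S hS
    calc S.card ≤ b * b ^ m := h
    _ = b ^ (m+1) := (pow_succ' b m).symm

lemma contains_prod (H P Q : Tournament) :
    (prodT P Q).Contains H → H.partNum ≤ P.n ∨ Q.Contains H := by
  rintro ⟨f, hfinj, hfadj⟩
  by_cases hconst : ∀ u v : Fin H.n, projP P Q (f u) = projP P Q (f v)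
  · right
    refine ⟨fun v => projQ P Q (f v), ?_, ?_⟩
    · intro u v h
      exact hfinj (proj_inj P Q (hconst u v) h)
    · intro u v
      rw [hfadj u v, prodT_adj_eq P Q (hconst u v)]
  · left
    push_neg at hconst
    obtain ⟨u₀, v₀, hne0⟩ := hconst
    set parts : Finset (Finset (Fin H.n)) :=
      (Finset.univ.image (fun v => projP P Q (f v))).image
        (fun a => Finset.univ.filter (fun v => projP P Q (f v) = a)) with hparts
    have hmem : ∀ A ∈ parts, ∃ a, (∃ w : Fin H.n, projP P Q (f w) = a) ∧
        A = Finset.univ.filter (fun v => projP P Q (f v) = a) := by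
      intro A hA
      rw [hparts] at hA
      simp only [Finset.mem_image] at hA
      obtain ⟨a, ⟨w, _, hw⟩, hAa⟩ := hA
      exact ⟨a, ⟨w, hw⟩, hAa.symm⟩
    have hpart : H.IsHomogeneousPartition parts := by
      constructor
      · intro A hA
        obtain ⟨a, ⟨w, hw⟩, rfl⟩ := hmem A hA
        constructor
        · exact ⟨w, Finset.mem_filter.mpr ⟨Finset.mem_univ _, hw⟩⟩
        · intro v hv
          have hva : projP P Q (f v) ≠ a := by
            intro h; exact hv (Finset.mem_filter.mpr ⟨Finset.mem_univ _, h⟩)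
          rcases P.total (projP P Q (f v)) a hva with h | h
          · left
            intro s hs
            have hsa : projP P Q (f s) = a := (Finset.mem_filter.mp hs).2
            rw [hfadj v s, prodT_adj_ne P Q (u := f v) (v := f s) (by rw [hsa]; exact hva), hsa]
            exact h
          · right
            intro s hs
            have hsa : projP P Q (f s) = a := (Finset.mem_filter.mp hs).2
            rw [hfadj s v, prodT_adj_ne P Q (u := f s) (v := f v) (by rw [hsa]; exact Ne.symm hva), hsa]
            exact h
      · intro v
        refine ⟨Finset.univ.filter (fun w => projP P Q (f w) = projP P Q (f v)),
          ⟨?_, ?_⟩, ?_⟩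
        · rw [hparts]
          exact Finset.mem_image.mpr ⟨projP P Q (f v),
            Finset.mem_image.mpr ⟨v, Finset.mem_univ _, rfl⟩, rfl⟩
        · exact Finset.mem_filter.mpr ⟨Finset.mem_univ _, rfl⟩
        · rintro A ⟨hA, hvA⟩
          obtain ⟨a, _, rfl⟩ := hmem A hA
          have hva : projP P Q (f v) = a := (Finset.mem_filter.mp hvA).2
          rw [hva]
    have h1lt : 1 < parts.card := by
      rw [Finset.one_lt_card]
      refine ⟨Finset.univ.filter (fun v => projP P Q (f v) = projP P Q (f u₀)), ?_,
        Finset.univ.filter (fun v => projP P Q (f v) = projP P Q (f v₀)), ?_, ?_⟩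
      · rw [hparts]
        exact Finset.mem_image.mpr ⟨projP P Q (f u₀),
          Finset.mem_image.mpr ⟨u₀, Finset.mem_univ _, rfl⟩, rfl⟩
      · rw [hparts]
        exact Finset.mem_image.mpr ⟨projP P Q (f v₀),
          Finset.mem_image.mpr ⟨v₀, Finset.mem_univ _, rfl⟩, rfl⟩
      · intro hAB
        have hu0 : u₀ ∈ Finset.univ.filter
            (fun v => projP P Q (f v) = projP P Q (f u₀)) :=
          Finset.mem_filter.mpr ⟨Finset.mem_univ _, rfl⟩
        rw [hAB] at hu0
        exact hne0 (Finset.mem_filter.mp hu0).2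
    have hle : parts.card ≤ P.n := by
      calc parts.card ≤ (Finset.univ.image (fun v => projP P Q (f v))).card := by
            rw [hparts]; exact Finset.card_image_le
      _ ≤ (Finset.univ : Finset (Fin P.n)).card := Finset.card_le_univ _
      _ = P.n := by simp
    have hpn : H.partNum ≤ parts.card := by
      show sInf _ ≤ parts.card
      exact Nat.sInf_le ⟨parts, hpart, h1lt, rfl⟩
    omega

lemma card_ge_two (H : Tournament) (h3 : 3 ≤ H.partNum) : 2 ≤ H.n := by
  have hpos : 0 < sInf {m | ∃ P : Finset (Finset (Fin H.n)),
      H.IsHomogeneousPartition P ∧ 1 < P.card ∧ P.card = m} := by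
    have h : H.partNum = sInf {m | ∃ P : Finset (Finset (Fin H.n)),
      H.IsHomogeneousPartition P ∧ 1 < P.card ∧ P.card = m} := rfl
    omega
  obtain ⟨m', hm'⟩ := Nat.nonempty_of_pos_sInf hpos
  obtain ⟨Pa, hPa, hgt, _⟩ := hm'
  obtain ⟨A, hA, B, hB, hAB⟩ := Finset.one_lt_card.mp hgt
  obtain ⟨a, ha⟩ := (hPa.1 A hA).1
  obtain ⟨b, hb⟩ := (hPa.1 B hB).1
  have hab : a ≠ b := by
    rintro rfl
    obtain ⟨C, _, hCuniq⟩ := hPa.2 a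
    exact hAB ((hCuniq A ⟨hA, ha⟩).trans (hCuniq B ⟨hB, hb⟩).symm)
  have h2 : 1 < Fintype.card (Fin H.n) := Fintype.one_lt_card_iff.mpr ⟨a, b, hab⟩
  rw [Fintype.card_fin] at h2; omega

lemma powT_HFree (H P : Tournament) (h3 : 3 ≤ H.partNum) (hPn : P.n < H.partNum) :
    ∀ m, ¬ (powT P m).Contains H := by
  have hH2 : 2 ≤ H.n := card_ge_two H h3
  intro m
  induction m with
  | zero =>
    rintro ⟨f, hfinj, -⟩
    have hc := Fintype.card_le_of_injective f hfinj
    simp only [Fintype.card_fin] at hc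
    have h1 : (powT P 0).n = 1 := rfl
    omega
  | succ m ih =>
    intro hcon
    rcases contains_prod H P (powT P m) hcon with h | h
    · omega
    · exact ih h
lemma exp_two_lt : Real.exp 2 < 7.39 := by
  have he := Real.exp_one_lt_d9
  have h2 : Real.exp 2 = Real.exp 1 ^ 2 := by
    rw [← Real.exp_nat_mul]; norm_num
  nlinarith [Real.exp_pos 1]

lemma log_two_ge : (2:ℝ)/3 ≤ Real.log 2 := by
  rw [Real.le_log_iff_exp_le (by norm_num : (0:ℝ) < 2)]
  have hcube : Real.exp (2/3) ^ 3 = Real.exp 2 := by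
    rw [← Real.exp_nat_mul]; norm_num
  nlinarith [Real.exp_pos (2/3), exp_two_lt, sq_nonneg (Real.exp (2/3) - 2),
    sq_nonneg (Real.exp (2/3) + 2)]

lemma log_three_ge : (13:ℝ)/12 ≤ Real.log 3 := by
  rw [Real.le_log_iff_exp_le (by norm_num : (0:ℝ) < 3)]
  by_contra h
  push_neg at h
  have h12 : (3:ℝ) ^ (12:ℕ) < Real.exp (13/12) ^ (12:ℕ) :=
    pow_lt_pow_left₀ h (by norm_num) (by norm_num)
  have he13 : Real.exp (13/12) ^ (12:ℕ) = Real.exp 13 := by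
    rw [← Real.exp_nat_mul]; norm_num
  have he13' : Real.exp 13 = Real.exp 1 ^ (13:ℕ) := by
    rw [← Real.exp_nat_mul]; norm_num
  have hb : Real.exp 1 ^ (13:ℕ) < (2.7182818286:ℝ) ^ (13:ℕ) :=
    pow_lt_pow_left₀ Real.exp_one_lt_d9 (Real.exp_pos 1).le (by norm_num)
  have hnum : (2.7182818286:ℝ) ^ (13:ℕ) < 3 ^ (12:ℕ) := by norm_num
  rw [he13, he13'] at h12
  linarith

lemma log_eight_le : Real.log 8 ≤ 3 := by
  rw [Real.log_le_iff_le_exp (by norm_num : (0:ℝ) < 8)]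
  have h3 : Real.exp 3 = Real.exp 1 ^ (3:ℕ) := by
    rw [← Real.exp_nat_mul]; norm_num
  have hb : (2.7182818283:ℝ) ^ (3:ℕ) ≤ Real.exp 1 ^ (3:ℕ) :=
    pow_le_pow_left₀ (by norm_num) Real.exp_one_gt_d9.le 3
  have hnum : (8:ℝ) ≤ (2.7182818283:ℝ) ^ (3:ℕ) := by norm_num
  rw [h3]; linarith

lemma loglog_three_ge : (1:ℝ)/13 ≤ Real.log (Real.log 3) := by
  have h1 : Real.log ((13:ℝ)/12) ≤ Real.log (Real.log 3) := by
    apply (Real.log_le_log_iff (by norm_num) (by linarith [log_three_ge])).mpr log_three_ge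
  have h2 : (1:ℝ)/13 ≤ Real.log ((13:ℝ)/12) := by
    have hinv : ((12:ℝ)/13)⁻¹ = 13/12 := by norm_num
    have := Real.log_le_sub_one_of_pos (show (0:ℝ) < 12/13 by norm_num)
    rw [← hinv, Real.log_inv]
    linarith
  linarith

lemma core_ineq (p : ℕ) (hp : 3 ≤ p) :
    Real.log ((2 * Nat.log 2 (p-1) + 3 : ℕ) : ℝ) ≤
      100 * Real.log (Real.log (p : ℝ)) / Real.log (p : ℝ) * Real.log ((p-1 : ℕ) : ℝ) := by
  set k := p - 1 with hkdef
  have hk2 : 2 ≤ k := by omega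
  have hkR : (2:ℝ) ≤ (k:ℝ) := by exact_mod_cast hk2
  have hpR : (3:ℝ) ≤ (p:ℝ) := by exact_mod_cast hp
  set L := Nat.log 2 k with hLdef
  set lk := Real.log (k:ℝ) with hlk
  set lp := Real.log (p:ℝ) with hlp
  set A := Real.log lp with hA
  have hlkpos : (2:ℝ)/3 ≤ lk := by
    calc (2:ℝ)/3 ≤ Real.log 2 := log_two_ge
    _ ≤ lk := (Real.log_le_log_iff (by norm_num) (by linarith)).mpr hkR
  have hlp3 : (13:ℝ)/12 ≤ lp := by
    calc (13:ℝ)/12 ≤ Real.log 3 := log_three_ge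
    _ ≤ lp := (Real.log_le_log_iff (by norm_num) (by linarith)).mpr hpR
  have hlklp : lk ≤ lp := by
    apply (Real.log_le_log_iff (by linarith) (by linarith)).mpr
    exact_mod_cast Nat.sub_le p 1
  have hlp2lk : lp ≤ 2 * lk := by
    have hps : (p:ℝ) ≤ (k:ℝ)^2 := by
      have : p ≤ k^2 := by nlinarith [hk2, (by omega : p = k + 1)]
      exact_mod_cast this
    calc lp ≤ Real.log ((k:ℝ)^2) := (Real.log_le_log_iff (by linarith) (by nlinarith)).mpr hps
    _ = 2 * lk := by rw [Real.log_pow]; norm_num [hlk]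
  have hAge : (1:ℝ)/13 ≤ A := by
    calc (1:ℝ)/13 ≤ Real.log (Real.log 3) := loglog_three_ge
    _ ≤ A := by
      apply (Real.log_le_log_iff (by linarith [log_three_ge]) (by linarith)).mpr
      calc Real.log 3 ≤ Real.log (p:ℝ) := (Real.log_le_log_iff (by norm_num) (by linarith)).mpr hpR
      _ = lp := rfl
  have hloglk : Real.log lk ≤ A := by
    apply (Real.log_le_log_iff (by linarith) (by linarith)).mpr hlklp
  -- bound on L
  have hLbound : (L:ℝ) * Real.log 2 ≤ lk := by
    have h2L : (2:ℕ)^L ≤ k := Nat.pow_log_le_self 2 (by omega)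
    have h2LR : ((2:ℝ))^L ≤ (k:ℝ) := by exact_mod_cast h2L
    have hlogpow : Real.log ((2:ℝ)^L) = (L:ℝ) * Real.log 2 := by rw [Real.log_pow]
    calc (L:ℝ) * Real.log 2 = Real.log ((2:ℝ)^L) := hlogpow.symm
    _ ≤ lk := (Real.log_le_log_iff (by positivity) (by linarith)).mpr h2LR
  have hLlk : (L:ℝ) ≤ (3/2) * lk := by
    nlinarith [mul_nonneg (Nat.cast_nonneg L : (0:ℝ) ≤ L)
      (by linarith [log_two_ge] : (0:ℝ) ≤ Real.log 2 - 2/3)]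
  have ht8 : ((2 * L + 3 : ℕ) : ℝ) ≤ 8 * lk := by
    push_cast
    nlinarith
  have hlogt : Real.log ((2 * L + 3 : ℕ) : ℝ) ≤ Real.log 8 + Real.log lk := by
    have h1 : Real.log ((2 * L + 3 : ℕ) : ℝ) ≤ Real.log (8 * lk) := by
      apply (Real.log_le_log_iff (by positivity) (by nlinarith)).mpr ht8
    rw [Real.log_mul (by norm_num) (by nlinarith)] at h1
    exact h1
  have hmain : Real.log ((2 * L + 3 : ℕ) : ℝ) ≤ 40 * A := by
    calc Real.log ((2 * L + 3 : ℕ) : ℝ) ≤ Real.log 8 + Real.log lk := hlogt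
    _ ≤ 3 + A := by linarith [log_eight_le]
    _ ≤ 40 * A := by nlinarith
  have hlppos : (0:ℝ) < lp := by linarith
  rw [div_mul_eq_mul_div, le_div_iff₀ hlppos]
  calc Real.log ((2 * L + 3 : ℕ) : ℝ) * lp ≤ (40 * A) * lp := by
        apply mul_le_mul_of_nonneg_right hmain (by linarith)
  _ ≤ 100 * A * lk := by nlinarith

/-- There exists a constant C > 0 such that for every tournament H with
p(H) ≥ 3 and every N, there exists an H-free tournament G with |G| ≥ N and
tr(G) ≤ |G|^(C·log(log(p(H)))/log(p(H))). -/
theorem stmt15 :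
    ∃ C : ℝ, 0 < C ∧
      ∀ H : Tournament, 3 ≤ H.partNum → ∀ N : ℕ,
        ∃ G : Tournament, G.HFree H ∧ N ≤ G.n ∧
          (G.transNum : ℝ) ≤ (G.n : ℝ) ^
            (C * Real.log (Real.log (H.partNum : ℝ)) / Real.log (H.partNum : ℝ)) := by
  refine ⟨100, by norm_num, ?_⟩
  intro H hp N
  set k := H.partNum - 1 with hkdef
  have hk2 : 2 ≤ k := by omega
  obtain ⟨P, hPn, hPtr⟩ := exists_low_tr k (by omega)
  set m := max 1 N with hm
  refine ⟨powT P m, ?_, ?_, ?_⟩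
  · exact powT_HFree H P hp (by rw [hPn]; omega) m
  · have hn : (powT P m).n = k ^ m := by rw [powT_n, hPn]
    rw [hn]
    calc N ≤ m := le_max_right 1 N
    _ ≤ 2 ^ m := (Nat.lt_two_pow_self).le
    _ ≤ k ^ m := Nat.pow_le_pow_left hk2 m
  · set t' := 2 * Nat.log 2 k + 3 with ht'
    have htr : (powT P m).transNum ≤ t' ^ m :=
      transNum_le _ _ (fun S hS => trBound_pow P t' (fun S' hS' => hPtr S' hS') m S hS)
    have hn : (powT P m).n = k ^ m := by rw [powT_n, hPn]
    set E := 100 * Real.log (Real.log (H.partNum : ℝ)) / Real.log (H.partNum : ℝ) with hE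
    have hcore := core_ineq H.partNum hp
    rw [← hkdef] at hcore
    rw [← ht', ← hE] at hcore
    -- hcore : Real.log ((t' : ℕ) : ℝ) ≤ E * Real.log ((k:ℕ):ℝ)
    have hkpos : (0:ℝ) < (k:ℝ) := by
      have : (0:ℕ) < k := by omega
      exact_mod_cast this
    have ht'pos : (0:ℝ) < ((t' : ℕ):ℝ) := by
      have : (0:ℕ) < t' := by omega
      exact_mod_cast this
    have hbase : ((t' : ℕ):ℝ) ≤ (k:ℝ) ^ E := by
      rw [Real.rpow_def_of_pos hkpos, ← Real.log_le_iff_le_exp ht'pos]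
      calc Real.log ((t':ℕ):ℝ) ≤ E * Real.log (k:ℝ) := hcore
      _ = Real.log (k:ℝ) * E := mul_comm _ _
    have h1 : ((powT P m).transNum : ℝ) ≤ ((t':ℕ):ℝ) ^ m := by
      calc ((powT P m).transNum : ℝ) ≤ ((t' ^ m : ℕ) : ℝ) := by exact_mod_cast htr
      _ = ((t':ℕ):ℝ)^m := by push_cast; ring
    have h2 : ((t':ℕ):ℝ)^m ≤ ((k:ℝ) ^ E) ^ m := pow_le_pow_left₀ ht'pos.le hbase m
    have h3 : ((k:ℝ) ^ E) ^ m = (((k^m : ℕ)):ℝ) ^ E := by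
      rw [← Real.rpow_natCast ((k:ℝ) ^ E) m, ← Real.rpow_mul hkpos.le, mul_comm,
        Real.rpow_mul hkpos.le, Real.rpow_natCast]
      congr 1
      push_cast
      ring
    rw [hn]
    calc ((powT P m).transNum : ℝ) ≤ ((t':ℕ):ℝ) ^ m := h1
    _ ≤ ((k:ℝ) ^ E) ^ m := h2
    _ = (((k^m : ℕ)):ℝ) ^ E := h3
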